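/- Let $\mu$ be a locally finite Borel measure on $\mathbb{R}$, let $1 < q < \infty$, and let $M^{\mathcal{D}}_{\mu}$ denote the dyadic maximal operator with respect to $\mu$. Then for every nonnegative locally $\mu$-integrable weight $w$ and every $f \in L^q(M^{\mathcal{D}}_{\mu} w \, d\mu)$, one has $\int_{\mathbb{R}} |M^{\mathcal{D}}_{\mu} f(x)|^q \, w(x) \, d\mu(x) \leq C_q \int_{\mathbb{R}} |f(x)|^q \, M^{\mathcal{D}}_{\mu} w(x) \, d\mu(x)$, where $C_q$ depends only on $q$. -/

import Mathlib

open MeasureTheory Set ENNReal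

noncomputable def dyadicI (k j : ℤ) : Set ℝ :=
  Set.Ico ((j : ℝ) * (2 : ℝ) ^ (-k)) (((j : ℝ) + 1) * (2 : ℝ) ^ (-k))

lemma measurableSet_dyadicI (k j : ℤ) : MeasurableSet (dyadicI k j) :=
  measurableSet_Ico

lemma mem_dyadicI_iff {k j : ℤ} {x : ℝ} : x ∈ dyadicI k j ↔ j = ⌊x * (2:ℝ)^k⌋ := by
  have h2 : (0:ℝ) < (2:ℝ)^k := by positivity
  constructor
  · rintro ⟨h1, h2'⟩
    symm
    rw [Int.floor_eq_iff]
    constructor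
    · calc (j:ℝ) = (j * (2:ℝ)^(-k)) * (2:ℝ)^k := by
            rw [mul_assoc, ← zpow_add₀ (by norm_num : (2:ℝ) ≠ 0)]; simp
        _ ≤ x * (2:ℝ)^k := by nlinarith
    · calc x * (2:ℝ)^k < ((j:ℝ)+1) * (2:ℝ)^(-k) * (2:ℝ)^k := by nlinarith
        _ = (j:ℝ)+1 := by
            rw [mul_assoc, ← zpow_add₀ (by norm_num : (2:ℝ) ≠ 0)]; simp
  · intro hj
    have h1 : (j:ℝ) ≤ x * (2:ℝ)^k := hj ▸ Int.floor_le _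
    have h2' : x * (2:ℝ)^k < (j:ℝ) + 1 := hj ▸ Int.lt_floor_add_one _
    constructor
    · have := mul_le_mul_of_nonneg_right h1 (le_of_lt (by positivity : (0:ℝ) < (2:ℝ)^(-k)))
      calc (j:ℝ) * (2:ℝ)^(-k) ≤ x * (2:ℝ)^k * (2:ℝ)^(-k) := this
        _ = x := by rw [mul_assoc, ← zpow_add₀ (by norm_num : (2:ℝ) ≠ 0)]; simp
    · have := mul_lt_mul_of_pos_right h2' (by positivity : (0:ℝ) < (2:ℝ)^(-k))
      calc x = x * (2:ℝ)^k * (2:ℝ)^(-k) := by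
            rw [mul_assoc, ← zpow_add₀ (by norm_num : (2:ℝ) ≠ 0)]; simp
        _ < ((j:ℝ)+1) * (2:ℝ)^(-k) := this

lemma dyadicI_nested {k j k' j' : ℤ} {x : ℝ} (hx : x ∈ dyadicI k j)
    (hx' : x ∈ dyadicI k' j') (hkk : k' ≤ k) : dyadicI k j ⊆ dyadicI k' j' := by
  -- endpoints comparison
  have h2 : ∀ m : ℤ, (0:ℝ) < (2:ℝ)^m := fun m => by positivity
  obtain ⟨ha, hb⟩ := hx
  obtain ⟨ha', hb'⟩ := hx'
  have hint : ∃ n : ℕ, k = k' + n := ⟨(k - k').toNat, by omega⟩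
  obtain ⟨n, rfl⟩ := hint
  -- key: j' * 2^n ≤ j and j + 1 ≤ (j'+1) * 2^n
  have e1 : (j':ℝ) * (2:ℝ)^(-(k'+n)) * (2:ℝ)^(n:ℤ) = (j':ℝ) * (2:ℝ)^(-k') := by
    rw [mul_assoc, ← zpow_add₀ (by norm_num : (2:ℝ) ≠ 0)]; ring_nf
  have e2 : ((j':ℝ)+1) * (2:ℝ)^(-(k'+n)) * (2:ℝ)^(n:ℤ) = ((j':ℝ)+1) * (2:ℝ)^(-k') := by
    rw [mul_assoc, ← zpow_add₀ (by norm_num : (2:ℝ) ≠ 0)]; ring_nf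
  -- lower: j' * 2^{-k'} ≤ j * 2^{-(k'+n)} since j' * 2^n ≤ j (integers)
  have hj1 : (j':ℤ) * 2^n ≤ j := by
    have : (j':ℝ) * 2^n ≤ x * (2:ℝ)^(k'+n) := by
      have := mul_le_mul_of_nonneg_right ha' (h2 (k'+n)).le
      calc (j':ℝ) * 2^n = (j':ℝ) * (2:ℝ)^(-k') * (2:ℝ)^(k'+n) := by
            rw [mul_assoc, ← zpow_add₀ (by norm_num : (2:ℝ) ≠ 0)]
            norm_num [zpow_natCast]
        _ ≤ x * (2:ℝ)^(k'+n) := this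
    have hfl : j = ⌊x * (2:ℝ)^(k'+n)⌋ := mem_dyadicI_iff.mp ⟨ha, hb⟩
    have : ((j' * 2^n : ℤ) : ℝ) ≤ x * (2:ℝ)^(k'+n) := by push_cast; exact this
    rw [hfl]; exact Int.le_floor.mpr this
  have hj2 : j + 1 ≤ (j' + 1) * 2^n := by
    have hfl' : j' = ⌊x * (2:ℝ)^k'⌋ := mem_dyadicI_iff.mp ⟨ha', hb'⟩
    have hlt : x * (2:ℝ)^(k'+n) < ((j':ℝ)+1) * 2^n := by
      have := mul_lt_mul_of_pos_right hb' (h2 (k'+n))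
      calc x * (2:ℝ)^(k'+n) < ((j':ℝ)+1) * (2:ℝ)^(-k') * (2:ℝ)^(k'+n) := by
            nlinarith [h2 (k'+n)]
        _ = ((j':ℝ)+1) * 2^n := by
            rw [mul_assoc, ← zpow_add₀ (by norm_num : (2:ℝ) ≠ 0)]
            norm_num [zpow_natCast]
    have hfl : j = ⌊x * (2:ℝ)^(k'+n)⌋ := mem_dyadicI_iff.mp ⟨ha, hb⟩
    have hjle : (j:ℝ) ≤ x * (2:ℝ)^(k'+n) := hfl ▸ Int.floor_le _
    have : (j:ℝ) < ((j'+1 : ℤ) : ℝ) * 2^n := by push_cast; linarith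
    have : (j:ℤ) < (j'+1) * 2^n := by exact_mod_cast (by push_cast at this ⊢; exact_mod_cast this : (j:ℝ) < (((j'+1) * 2^n : ℤ) : ℝ))
    omega
  have key : (2:ℝ)^(-k') = (2:ℝ)^(n:ℤ) * (2:ℝ)^(-(k'+n)) := by
    rw [← zpow_add₀ (by norm_num : (2:ℝ) ≠ 0)]; ring_nf
  have hp : (0:ℝ) < (2:ℝ)^(-(k'+(n:ℤ))) := h2 _
  have c1 : ((j' * 2^n : ℤ):ℝ) ≤ (j:ℝ) := by exact_mod_cast hj1
  have c2 : ((j + 1 : ℤ):ℝ) ≤ (((j'+1) * 2^n : ℤ):ℝ) := by exact_mod_cast hj2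
  push_cast at c1 c2
  rintro y ⟨hy1, hy2⟩
  constructor
  · rw [key]
    have : (2:ℝ)^(n:ℤ) = (2:ℝ)^n := by norm_num [zpow_natCast]
    rw [this]
    nlinarith
  · rw [key]
    have : (2:ℝ)^(n:ℤ) = (2:ℝ)^n := by norm_num [zpow_natCast]
    rw [this]
    nlinarith

noncomputable def dyadicMax (μ : Measure ℝ) (f : ℝ → ℝ≥0∞) (x : ℝ) : ℝ≥0∞ :=
  ⨆ (k : ℤ) (j : ℤ) (_ : x ∈ dyadicI k j),
    (∫⁻ y in dyadicI k j, f y ∂μ) / μ (dyadicI k j)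

lemma le_dyadicMax {μ : Measure ℝ} {f : ℝ → ℝ≥0∞} {k j : ℤ} {x : ℝ}
    (hx : x ∈ dyadicI k j) :
    (∫⁻ y in dyadicI k j, f y ∂μ) / μ (dyadicI k j) ≤ dyadicMax μ f x := by
  refine le_trans ?_ (le_iSup _ k)
  refine le_trans ?_ (le_iSup _ j)
  exact le_iSup (fun (_ : x ∈ dyadicI k j) => _) hx

lemma lt_dyadicMax_iff {μ : Measure ℝ} {f : ℝ → ℝ≥0∞} {x : ℝ} {t : ℝ≥0∞} :
    t < dyadicMax μ f x ↔ ∃ k j, x ∈ dyadicI k j ∧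
      t < (∫⁻ y in dyadicI k j, f y ∂μ) / μ (dyadicI k j) := by
  simp only [dyadicMax, lt_iSup_iff, exists_prop]

lemma dyadicMax_le_of_le {μ : Measure ℝ} {f : ℝ → ℝ≥0∞} {c : ℝ≥0∞} {x : ℝ}
    (hf : ∀ y, f y ≤ c) : dyadicMax μ f x ≤ c := by
  refine iSup_le fun k => iSup_le fun j => iSup_le fun _ => ?_
  calc (∫⁻ y in dyadicI k j, f y ∂μ) / μ (dyadicI k j)
      ≤ (c * μ (dyadicI k j)) / μ (dyadicI k j) := by
        gcongr
        calc (∫⁻ y in dyadicI k j, f y ∂μ) ≤ ∫⁻ _ in dyadicI k j, c ∂μ :=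
              lintegral_mono hf
          _ = c * μ (dyadicI k j) := by
              rw [setLIntegral_const]
    _ ≤ c := by
        rw [mul_div_assoc]
        exact mul_le_of_le_one_right' ENNReal.div_self_le_one

lemma dyadicMax_add_le {μ : Measure ℝ} {f g : ℝ → ℝ≥0∞} (hf : Measurable f)
    (hg : Measurable g) (x : ℝ) :
    dyadicMax μ (fun y => f y + g y) x ≤ dyadicMax μ f x + dyadicMax μ g x := by
  refine iSup_le fun k => iSup_le fun j => iSup_le fun hx => ?_
  rw [lintegral_add_left hf, ENNReal.add_div]
  exact add_le_add (le_dyadicMax hx) (le_dyadicMax hx)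

lemma measurable_dyadicMax {μ : Measure ℝ} {f : ℝ → ℝ≥0∞} :
    Measurable (dyadicMax μ f) := by
  apply Measurable.iSup; intro k
  apply Measurable.iSup; intro j
  have : (fun x => ⨆ (_ : x ∈ dyadicI k j),
      (∫⁻ y in dyadicI k j, f y ∂μ) / μ (dyadicI k j)) =
      (dyadicI k j).indicator (fun _ => (∫⁻ y in dyadicI k j, f y ∂μ) / μ (dyadicI k j)) := by
    funext x
    by_cases hx : x ∈ dyadicI k j
    · simp [hx]
    · simp [hx]
  rw [this]
  exact measurable_const.indicator (measurableSet_dyadicI k j)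

lemma measure_dyadicI_lt_top (μ : Measure ℝ) [IsLocallyFiniteMeasure μ] (k j : ℤ) :
    μ (dyadicI k j) < ∞ := by
  refine lt_of_le_of_lt (measure_mono Ico_subset_Icc_self) ?_
  exact (isCompact_Icc).measure_lt_top

lemma cube_est {μ : Measure ℝ} [IsLocallyFiniteMeasure μ] {w g : ℝ → ℝ≥0∞}
    (hg : Measurable g) {k j : ℤ} {t : ℝ≥0∞}
    (ht : t < (∫⁻ y in dyadicI k j, g y ∂μ) / μ (dyadicI k j)) :
    t * μ.withDensity w (dyadicI k j)
      ≤ ∫⁻ x in dyadicI k j, g x * dyadicMax μ w x ∂μ := by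
  set I := dyadicI k j with hI
  set m := μ I with hm
  set F := ∫⁻ y in I, g y ∂μ with hF
  have hmtop : m ≠ ∞ := (measure_dyadicI_lt_top μ k j).ne
  have hm0 : m ≠ 0 := by
    intro h0
    rw [hF, hI] at ht
    rw [Measure.restrict_eq_zero.mpr h0] at ht
    simp at ht
  have htm : t * m ≤ F := (ENNReal.mul_lt_of_lt_div ht).le
  have hW : μ.withDensity w I = ∫⁻ y in I, w y ∂μ :=
    withDensity_apply w (measurableSet_dyadicI k j)
  set W := ∫⁻ y in I, w y ∂μ with hWdef
  have key : ∀ x ∈ I, W / m ≤ dyadicMax μ w x := fun x hx => le_dyadicMax hx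
  calc t * μ.withDensity w I = t * W := by rw [hW]
    _ = (W / m) * (t * m) := by
        rw [div_eq_mul_inv, mul_comm t m, ← mul_assoc, mul_assoc W m⁻¹ m,
          ENNReal.inv_mul_cancel hm0 hmtop, mul_one, mul_comm]
    _ ≤ (W / m) * F := by gcongr
    _ = ∫⁻ x in I, g x * (W / m) ∂μ := by
        rw [lintegral_mul_const'' _ hg.aemeasurable, hF, mul_comm]
    _ ≤ ∫⁻ x in I, g x * dyadicMax μ w x ∂μ := by
        refine setLIntegral_mono (hg.mul measurable_dyadicMax) fun x hx => ?_
        exact mul_le_mul_right (key x hx) _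

lemma weak_type {μ : Measure ℝ} [IsLocallyFiniteMeasure μ] (w g : ℝ → ℝ≥0∞)
    (hg : Measurable g) (t : ℝ≥0∞) :
    t * μ.withDensity w {x | t < dyadicMax μ g x}
      ≤ ∫⁻ x, g x * dyadicMax μ w x ∂μ := by
  classical
  set ν := μ.withDensity w with hν
  set avg := fun p : ℤ × ℤ => (∫⁻ y in dyadicI p.1 p.2, g y ∂μ) / μ (dyadicI p.1 p.2)
    with havg
  set S : Set (ℤ × ℤ) := {p | t < avg p} with hS
  set E := {x | t < dyadicMax μ g x} with hE
  have hSE : ∀ p ∈ S, dyadicI p.1 p.2 ⊆ E := by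
    intro p hp y hy
    exact lt_of_lt_of_le hp (le_dyadicMax hy)
  set SK : ℕ → Set (ℤ × ℤ) := fun K => {p | p ∈ S ∧ -(K:ℤ) ≤ p.1} with hSK
  set Good : ℕ → Set (ℤ × ℤ) := fun K => {p | p ∈ SK K ∧
    ∀ k' j' : ℤ, -(K:ℤ) ≤ k' → k' < p.1 → dyadicI p.1 p.2 ⊆ dyadicI k' j' →
      (k', j') ∉ S} with hGood
  set U : ℕ → Set ℝ := fun K => ⋃ p ∈ SK K, dyadicI p.1 p.2 with hU
  have hUG : ∀ K, U K = ⋃ p ∈ Good K, dyadicI p.1 p.2 := by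
    intro K
    apply Subset.antisymm
    · intro x hx
      simp only [hU, mem_iUnion, exists_prop] at hx
      obtain ⟨⟨k, j⟩, hpS, hxp⟩ := hx
      have hfl : j = ⌊x * (2:ℝ)^k⌋ := mem_dyadicI_iff.mp hxp
      set P : ℤ → Prop := fun k' => -(K:ℤ) ≤ k' ∧ (k', ⌊x * (2:ℝ)^k'⌋) ∈ S with hP
      have hPk : P k := ⟨hpS.2, by rw [← hfl]; exact hpS.1⟩
      obtain ⟨k₀, hPk₀, hmin⟩ := Int.exists_least_of_bdd
        (⟨-(K:ℤ), fun z hz => hz.1⟩ : ∃ b : ℤ, ∀ z : ℤ, P z → b ≤ z) ⟨k, hPk⟩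
      set j₀ := ⌊x * (2:ℝ)^k₀⌋ with hj₀
      have hxI₀ : x ∈ dyadicI k₀ j₀ := mem_dyadicI_iff.mpr rfl
      refine mem_iUnion₂.mpr ⟨(k₀, j₀), ⟨⟨hPk₀.2, hPk₀.1⟩, ?_⟩, hxI₀⟩
      intro k' j' hk'1 hk'2 hsub hS'
      have hx' : x ∈ dyadicI k' j' := hsub hxI₀
      have : P k' := ⟨hk'1, by rw [← mem_dyadicI_iff.mp hx']; exact hS'⟩
      exact absurd (hmin k' this) (by omega)
    · refine iUnion₂_subset fun p hp => ?_
      exact subset_iUnion₂ (s := fun p _ => dyadicI p.1 p.2) p hp.1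
  have hGd : ∀ K, (Good K).PairwiseDisjoint (fun p : ℤ × ℤ => dyadicI p.1 p.2) := by
    intro K p hp q hq hpq
    rw [Function.onFun]
    by_contra hnd
    rw [Set.not_disjoint_iff] at hnd
    obtain ⟨x, hxp, hxq⟩ := hnd
    rcases lt_trichotomy p.1 q.1 with h | h | h
    · exact hq.2 p.1 p.2 hp.1.2 h (dyadicI_nested hxq hxp h.le) hp.1.1
    · apply hpq
      have hp2 := mem_dyadicI_iff.mp hxp
      have hq2 := mem_dyadicI_iff.mp hxq
      exact Prod.ext h (by rw [hp2, h, ← hq2])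
    · exact hp.2 q.1 q.2 hq.1.2 h (dyadicI_nested hxp hxq h.le) hq.1.1
  have hEU : E = ⋃ K, U K := by
    ext x
    constructor
    · intro hx
      obtain ⟨k, j, hxI, hlt⟩ := lt_dyadicMax_iff.mp hx
      refine mem_iUnion.mpr ⟨k.natAbs, mem_iUnion₂.mpr ⟨(k, j), ⟨hlt, by omega⟩, hxI⟩⟩
    · intro hx
      obtain ⟨K, hK⟩ := mem_iUnion.mp hx
      obtain ⟨p, hp, hxp⟩ := mem_iUnion₂.mp hK
      exact hSE p hp.1 hxp
  have hmono : Monotone U := by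
    intro K K' hKK'
    refine iUnion₂_subset fun p hp => ?_
    have h2 : -(K':ℤ) ≤ p.1 := by have := hp.2; omega
    have : p ∈ SK K' := ⟨hp.1, h2⟩
    exact subset_iUnion₂ (s := fun p _ => dyadicI p.1 p.2) p this
  have hνE : ν E = ⨆ K, ν (U K) := by
    rw [hEU]
    exact hmono.directed_le.measure_iUnion
  rw [hνE, ENNReal.mul_iSup]
  refine iSup_le fun K => ?_
  rw [hUG K]
  have hcnt : (Good K).Countable := (Good K).to_countable
  rw [measure_biUnion hcnt (hGd K) (fun p _ => measurableSet_dyadicI p.1 p.2)]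
  rw [← ENNReal.tsum_mul_left]
  calc ∑' (p : Good K), t * ν (dyadicI (p:ℤ×ℤ).1 (p:ℤ×ℤ).2)
      ≤ ∑' (p : Good K), ∫⁻ x in dyadicI (p:ℤ×ℤ).1 (p:ℤ×ℤ).2, g x * dyadicMax μ w x ∂μ := by
        refine ENNReal.tsum_le_tsum fun p => ?_
        exact cube_est hg p.2.1.1
    _ = ∫⁻ x in ⋃ p ∈ Good K, dyadicI p.1 p.2, g x * dyadicMax μ w x ∂μ := by
        rw [lintegral_biUnion hcnt (fun p _ => measurableSet_dyadicI p.1 p.2) (hGd K)]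
    _ ≤ ∫⁻ x, g x * dyadicMax μ w x ∂μ := setLIntegral_le_lintegral _ _

lemma lintegral_rpow_Ioo {r b : ℝ} (hr : -1 < r) (hb : 0 ≤ b) :
    ∫⁻ t in Ioo (0:ℝ) b, ENNReal.ofReal (t ^ r) = ENNReal.ofReal (b ^ (r+1) / (r+1)) := by
  rcases eq_or_lt_of_le hb with hb0 | hb0
  · rw [← hb0]
    simp [Real.zero_rpow (by linarith : r + 1 ≠ 0)]
  · have hint : IntegrableOn (fun t : ℝ => t ^ r) (Ioo 0 b) volume := by
      have := (intervalIntegral.intervalIntegrable_rpow' (a := 0) (b := b) hr).1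
      exact this.mono_set Ioo_subset_Ioc_self
    rw [← ofReal_integral_eq_lintegral_ofReal hint ?nn]
    case nn =>
      filter_upwards [self_mem_ae_restrict measurableSet_Ioo] with t ht
      exact Real.rpow_nonneg ht.1.le r
    congr 1
    rw [← integral_Ioc_eq_integral_Ioo, ← intervalIntegral.integral_of_le hb]
    rw [integral_rpow (Or.inl hr)]
    rw [Real.zero_rpow (by linarith : r + 1 ≠ 0)]
    ring

lemma rpow_eq_lintegral_layer {q : ℝ} (hq : 1 < q) (a : ℝ≥0∞) :
    a ^ q = ∫⁻ t in Ioi (0:ℝ),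
      (if ENNReal.ofReal t < a then ENNReal.ofReal (q * t ^ (q-1)) else 0) := by
  have hq0 : (0:ℝ) < q := by linarith
  have hmble : MeasurableSet {t : ℝ | ENNReal.ofReal t < a} :=
    measurableSet_lt (ENNReal.measurable_ofReal) measurable_const
  have hfun : (fun t : ℝ => if ENNReal.ofReal t < a then ENNReal.ofReal (q * t ^ (q-1)) else 0)
      = {t : ℝ | ENNReal.ofReal t < a}.indicator (fun t => ENNReal.ofReal (q * t ^ (q-1))) := by
    funext t
    by_cases h : ENNReal.ofReal t < a <;> simp [Set.indicator, h]
  rw [hfun, lintegral_indicator hmble, Measure.restrict_restrict hmble]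
  rcases eq_or_ne a ⊤ with rfl | ha
  · have hset : {t : ℝ | ENNReal.ofReal t < ⊤} ∩ Ioi 0 = Ioi 0 := by
      ext t; simp [ENNReal.ofReal_lt_top]
    rw [hset, ENNReal.top_rpow_of_pos hq0, eq_comm, ← top_le_iff]
    calc (⊤:ℝ≥0∞) = ENNReal.ofReal q * volume (Ioi (1:ℝ)) := by
          rw [Real.volume_Ioi, ENNReal.mul_top (ENNReal.ofReal_pos.mpr hq0).ne']
      _ = ∫⁻ _ in Ioi (1:ℝ), ENNReal.ofReal q := by rw [setLIntegral_const]
      _ ≤ ∫⁻ t in Ioi (1:ℝ), ENNReal.ofReal (q * t ^ (q-1)) := by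
          refine setLIntegral_mono (by measurability) fun t ht => ?_
          refine ENNReal.ofReal_le_ofReal ?_
          nlinarith [Real.one_le_rpow (le_of_lt ht) (by linarith : (0:ℝ) ≤ q - 1)]
      _ ≤ ∫⁻ t in Ioi (0:ℝ), ENNReal.ofReal (q * t ^ (q-1)) := by
          exact lintegral_mono' (Measure.restrict_mono (fun t (ht : (1:ℝ) < t) => by
            simpa using lt_trans one_pos ht) le_rfl) le_rfl
  · have hset : {t : ℝ | ENNReal.ofReal t < a} ∩ Ioi 0 = Ioo 0 a.toReal := by
      ext t
      simp only [mem_inter_iff, mem_setOf_eq, mem_Ioi, mem_Ioo]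
      constructor
      · rintro ⟨h1, h2⟩
        exact ⟨h2, (ENNReal.ofReal_lt_iff_lt_toReal h2.le ha).mp h1⟩
      · rintro ⟨h1, h2⟩
        exact ⟨(ENNReal.ofReal_lt_iff_lt_toReal h1.le ha).mpr h2, h1⟩
    rw [hset]
    have : ∀ t : ℝ, ENNReal.ofReal (q * t ^ (q-1)) =
        ENNReal.ofReal q * ENNReal.ofReal (t ^ (q-1)) := fun t =>
      ENNReal.ofReal_mul hq0.le
    simp_rw [this]
    rw [lintegral_const_mul' _ _ ENNReal.ofReal_ne_top,
      lintegral_rpow_Ioo (by linarith) ENNReal.toReal_nonneg]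
    rw [← ENNReal.ofReal_mul hq0.le]
    have harith : q * (a.toReal ^ (q - 1 + 1) / (q - 1 + 1)) = a.toReal ^ q := by
      have : q - 1 + 1 = q := by ring
      rw [this]; field_simp
    rw [harith]
    have hpow_top : a ^ q ≠ ⊤ := by
      simp [ENNReal.rpow_eq_top_iff, ha, hq0, not_lt.mpr hq0.le]
    rw [ENNReal.toReal_rpow, ENNReal.ofReal_toReal hpow_top]

lemma inner_integral {q : ℝ} (hq : 1 < q) {F : ℝ≥0∞} (hF : F ≠ ⊤) :
    (∫⁻ t in Ioi (0:ℝ), (if ENNReal.ofReal (t/2) < F then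
       ENNReal.ofReal (q * t ^ (q-1)) * (ENNReal.ofReal (t/2))⁻¹ else 0))
      = ENNReal.ofReal (2^q * q / (q-1)) * F ^ (q - 1) := by
  have hq0 : (0:ℝ) < q := by linarith
  set b := 2 * F.toReal with hb
  have hb0 : 0 ≤ b := by positivity
  have hmble : MeasurableSet {t : ℝ | ENNReal.ofReal (t/2) < F} :=
    measurableSet_lt (ENNReal.measurable_ofReal.comp (measurable_id.div_const 2))
      measurable_const
  have hfun : (fun t : ℝ => if ENNReal.ofReal (t/2) < F then
      ENNReal.ofReal (q * t ^ (q-1)) * (ENNReal.ofReal (t/2))⁻¹ else 0)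
      = {t : ℝ | ENNReal.ofReal (t/2) < F}.indicator
        (fun t => ENNReal.ofReal (q * t ^ (q-1)) * (ENNReal.ofReal (t/2))⁻¹) := by
    funext t
    by_cases h : ENNReal.ofReal (t/2) < F <;> simp [Set.indicator, h]
  rw [hfun, lintegral_indicator hmble, Measure.restrict_restrict hmble]
  have hset : {t : ℝ | ENNReal.ofReal (t/2) < F} ∩ Ioi 0 = Ioo 0 b := by
    ext t
    simp only [mem_inter_iff, mem_setOf_eq, mem_Ioi, mem_Ioo]
    constructor
    · rintro ⟨h1, h2⟩
      refine ⟨h2, ?_⟩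
      have := (ENNReal.ofReal_lt_iff_lt_toReal (by linarith) hF).mp h1
      rw [hb]; linarith
    · rintro ⟨h1, h2⟩
      refine ⟨(ENNReal.ofReal_lt_iff_lt_toReal (by linarith) hF).mpr ?_, h1⟩
      rw [hb] at h2; linarith
  rw [hset]
  have hcong : ∀ t ∈ Ioo (0:ℝ) b,
      ENNReal.ofReal (q * t ^ (q-1)) * (ENNReal.ofReal (t/2))⁻¹
        = ENNReal.ofReal (2*q) * ENNReal.ofReal (t ^ (q-2)) := by
    intro t ht
    rw [← ENNReal.ofReal_inv_of_pos (by linarith [ht.1] : (0:ℝ) < t/2)]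
    rw [← ENNReal.ofReal_mul (mul_nonneg hq0.le (Real.rpow_nonneg ht.1.le _)),
      ← ENNReal.ofReal_mul (by positivity)]
    congr 1
    have htpow : t ^ (q-2) = t ^ (q-1) / t := by
      rw [show q - 2 = (q-1) - 1 by ring, Real.rpow_sub ht.1, Real.rpow_one]
    rw [htpow]
    field_simp
  rw [setLIntegral_congr_fun measurableSet_Ioo hcong]
  rw [lintegral_const_mul' _ _ ENNReal.ofReal_ne_top,
    lintegral_rpow_Ioo (by linarith) hb0]
  rw [← ENNReal.ofReal_mul (by positivity)]
  have harith : 2 * q * (b ^ (q - 2 + 1) / (q - 2 + 1))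
      = (2^q * q / (q-1)) * F.toReal ^ (q-1) := by
    have h1 : q - 2 + 1 = q - 1 := by ring
    rw [h1, hb, Real.mul_rpow (by norm_num) ENNReal.toReal_nonneg]
    have h2 : (2:ℝ)^q = 2 * 2^(q-1) := by
      have h := Real.rpow_add (by norm_num : (0:ℝ) < 2) 1 (q-1)
      rw [show (1:ℝ) + (q-1) = q by ring, Real.rpow_one] at h
      exact h
    rw [h2]
    field_simp
  rw [harith, ENNReal.ofReal_mul (div_nonneg (mul_nonneg
    (Real.rpow_pos_of_pos (by norm_num) q).le hq0.le) (by linarith))]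
  congr 1
  rw [ENNReal.toReal_rpow, ENNReal.ofReal_toReal]
  exact ENNReal.rpow_ne_top_of_nonneg (by linarith) hF

theorem stmt0 (q : ℝ) (hq : 1 < q) :
    ∃ C : ℝ≥0∞, 0 < C ∧ C < ∞ ∧
      ∀ (μ : Measure ℝ) [IsLocallyFiniteMeasure μ] (w : ℝ → ℝ≥0∞) (f : ℝ → ℝ),
        Measurable w → Measurable f →
        (∫⁻ x, ((‖f x‖₊ : ℝ≥0∞) ^ q) * dyadicMax μ w x ∂μ) < ∞ →
        (∫⁻ x, (dyadicMax μ (fun y => (‖f y‖₊ : ℝ≥0∞)) x) ^ q * w x ∂μ)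
          ≤ C * ∫⁻ x, ((‖f x‖₊ : ℝ≥0∞) ^ q) * dyadicMax μ w x ∂μ := by
  classical
  have hq0 : (0:ℝ) < q := by linarith
  set C := ENNReal.ofReal (2^q * q / (q-1)) with hC
  have hCpos : 0 < C := ENNReal.ofReal_pos.mpr
    (div_pos (mul_pos (Real.rpow_pos_of_pos (by norm_num) q) hq0) (by linarith))
  refine ⟨C, hCpos, ENNReal.ofReal_lt_top, ?_⟩
  intro μ hloc w f hw hf hfin
  haveI := hloc
  set F : ℝ → ℝ≥0∞ := fun y => (‖f y‖₊ : ℝ≥0∞) with hFdef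
  have hFm : Measurable F := hf.nnnorm.coe_nnreal_ennreal
  have hFne : ∀ x, F x ≠ ⊤ := fun x => ENNReal.coe_ne_top
  set G := dyadicMax μ F with hGdef
  set Mw := dyadicMax μ w with hMwdef
  have hGm : Measurable G := measurable_dyadicMax
  have hMwm : Measurable Mw := measurable_dyadicMax
  -- truncations
  set F1 : ℝ → ℝ → ℝ≥0∞ := fun t y => if ENNReal.ofReal (t/2) < F y then F y else 0
    with hF1def
  have hF1m : ∀ t, Measurable (F1 t) := fun t =>
    Measurable.ite (measurableSet_lt measurable_const hFm) hFm measurable_const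
  -- subset claim
  have hsubset : ∀ t : ℝ, 0 < t → {x | ENNReal.ofReal t < G x} ⊆
      {x | ENNReal.ofReal (t/2) < dyadicMax μ (F1 t) x} := by
    intro t ht x hx
    set F2 : ℝ → ℝ≥0∞ := fun y => if ENNReal.ofReal (t/2) < F y then 0 else F y with hF2def
    have hF2m : Measurable F2 :=
      Measurable.ite (measurableSet_lt measurable_const hFm) measurable_const hFm
    have hsplit : F = fun y => F1 t y + F2 y := by
      funext y
      by_cases h : ENNReal.ofReal (t/2) < F y <;> simp [hF1def, hF2def, h]
    have hle : G x ≤ dyadicMax μ (F1 t) x + ENNReal.ofReal (t/2) := by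
      calc G x = dyadicMax μ (fun y => F1 t y + F2 y) x := by rw [hGdef, hsplit]
        _ ≤ dyadicMax μ (F1 t) x + dyadicMax μ F2 x := dyadicMax_add_le (hF1m t) hF2m x
        _ ≤ dyadicMax μ (F1 t) x + ENNReal.ofReal (t/2) := by
            refine add_le_add_right (dyadicMax_le_of_le fun y => ?_) _
            by_cases h : ENNReal.ofReal (t/2) < F y <;> simp [hF2def, h]
            exact le_of_not_gt h
    by_contra hcon
    rw [mem_setOf_eq, not_lt] at hcon
    have hlt : ENNReal.ofReal t < ENNReal.ofReal (t/2) + ENNReal.ofReal (t/2) :=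
      lt_of_lt_of_le hx (le_trans hle (add_le_add_left hcon _))
    rw [← ENNReal.ofReal_add (by linarith) (by linarith), add_halves] at hlt
    exact lt_irrefl _ hlt
  -- per-t bound
  have hmeas_bound : ∀ t : ℝ, 0 < t →
      μ.withDensity w {x | ENNReal.ofReal t < G x}
        ≤ (ENNReal.ofReal (t/2))⁻¹ * ∫⁻ x, F1 t x * Mw x ∂μ := by
    intro t ht
    have h1 := weak_type (μ := μ) w (F1 t) (hF1m t) (ENNReal.ofReal (t/2))
    have h2 : μ.withDensity w {x | ENNReal.ofReal t < G x}
        ≤ μ.withDensity w {x | ENNReal.ofReal (t/2) < dyadicMax μ (F1 t) x} :=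
      measure_mono (hsubset t ht)
    have ht' : ENNReal.ofReal (t/2) ≠ 0 := (ENNReal.ofReal_pos.mpr (by linarith)).ne'
    calc μ.withDensity w {x | ENNReal.ofReal t < G x}
        ≤ μ.withDensity w {x | ENNReal.ofReal (t/2) < dyadicMax μ (F1 t) x} := h2
      _ = (ENNReal.ofReal (t/2))⁻¹ * (ENNReal.ofReal (t/2) *
            μ.withDensity w {x | ENNReal.ofReal (t/2) < dyadicMax μ (F1 t) x}) := by
          rw [← mul_assoc, ENNReal.inv_mul_cancel ht' ENNReal.ofReal_ne_top, one_mul]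
      _ ≤ (ENNReal.ofReal (t/2))⁻¹ * ∫⁻ x, F1 t x * Mw x ∂μ := mul_le_mul_right h1 _

  -- measurability helpers
  have hrm : Measurable fun t : ℝ => ENNReal.ofReal (q * t ^ (q-1)) :=
    (measurable_const.mul
      (Real.continuous_rpow_const (by linarith : (0:ℝ) ≤ q - 1)).measurable).ennreal_ofReal
  have hsetA : MeasurableSet {p : ℝ × ℝ | ENNReal.ofReal p.2 < G p.1} :=
    measurableSet_lt (ENNReal.measurable_ofReal.comp measurable_snd) (hGm.comp measurable_fst)
  have hΦm : Measurable (Function.uncurry fun x t =>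
      (if ENNReal.ofReal t < G x then ENNReal.ofReal (q * t^(q-1)) else 0) * w x) := by
    show Measurable fun p : ℝ × ℝ =>
      (if ENNReal.ofReal p.2 < G p.1 then ENNReal.ofReal (q * p.2^(q-1)) else 0) * w p.1
    exact (Measurable.ite hsetA (hrm.comp measurable_snd) measurable_const).mul
      (hw.comp measurable_fst)
  have hΨm : Measurable (Function.uncurry fun t x =>
      (ENNReal.ofReal (q * t^(q-1)) * (ENNReal.ofReal (t/2))⁻¹) * (F1 t x * Mw x)) := by
    show Measurable fun p : ℝ × ℝ =>
      (ENNReal.ofReal (q * p.1^(q-1)) * (ENNReal.ofReal (p.1/2))⁻¹)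
        * (F1 p.1 p.2 * Mw p.2)
    have h1 : Measurable fun p : ℝ × ℝ => F1 p.1 p.2 := by
      show Measurable fun p : ℝ × ℝ => if ENNReal.ofReal (p.1/2) < F p.2 then F p.2 else 0
      exact Measurable.ite
        (measurableSet_lt ((measurable_fst.div_const 2).ennreal_ofReal)
          (hFm.comp measurable_snd)) (hFm.comp measurable_snd) measurable_const
    exact ((hrm.comp measurable_fst).mul
      ((measurable_fst.div_const 2).ennreal_ofReal.inv)).mul
      (h1.mul (hMwm.comp measurable_snd))
  -- inner x-integral identity
  have hinner : ∀ t : ℝ,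
      (∫⁻ x, (if ENNReal.ofReal t < G x then ENNReal.ofReal (q * t^(q-1)) else 0) * w x ∂μ)
        = ENNReal.ofReal (q * t^(q-1)) * μ.withDensity w {x | ENNReal.ofReal t < G x} := by
    intro t
    have hE : MeasurableSet {x | ENNReal.ofReal t < G x} :=
      measurableSet_lt measurable_const hGm
    rw [withDensity_apply _ hE, ← lintegral_const_mul' _ _ ENNReal.ofReal_ne_top,
      ← lintegral_indicator hE]
    congr 1
    funext x
    by_cases h : ENNReal.ofReal t < G x <;> simp [Set.indicator, h]
  -- main chain
  have main : (∫⁻ x, G x ^ q * w x ∂μ) ≤ C * ∫⁻ x, F x ^ q * Mw x ∂μ := by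
    calc (∫⁻ x, G x ^ q * w x ∂μ)
        = ∫⁻ x, ∫⁻ t in Ioi (0:ℝ),
            (if ENNReal.ofReal t < G x then ENNReal.ofReal (q * t^(q-1)) else 0) * w x
              ∂volume ∂μ := by
          congr 1
          funext x
          rw [rpow_eq_lintegral_layer hq (G x)]
          exact (lintegral_mul_const'' (w x)
            (Measurable.ite (measurableSet_lt ENNReal.measurable_ofReal measurable_const)
              hrm measurable_const).aemeasurable).symm
      _ = ∫⁻ t in Ioi (0:ℝ), ∫⁻ x,
            (if ENNReal.ofReal t < G x then ENNReal.ofReal (q * t^(q-1)) else 0) * w x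
              ∂μ ∂volume :=
          lintegral_lintegral_swap hΦm.aemeasurable
      _ ≤ ∫⁻ t in Ioi (0:ℝ), ∫⁻ x,
            (ENNReal.ofReal (q * t^(q-1)) * (ENNReal.ofReal (t/2))⁻¹)
              * (F1 t x * Mw x) ∂μ ∂volume := by
          refine setLIntegral_mono (Measurable.lintegral_prod_right hΨm) fun t ht => ?_
          have ht' : ENNReal.ofReal (t/2) ≠ 0 :=
            (ENNReal.ofReal_pos.mpr (by simpa using (half_pos (mem_Ioi.mp ht)))).ne'
          rw [hinner t]
          calc ENNReal.ofReal (q * t^(q-1))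
                * μ.withDensity w {x | ENNReal.ofReal t < G x}
              ≤ ENNReal.ofReal (q * t^(q-1)) * ((ENNReal.ofReal (t/2))⁻¹
                  * ∫⁻ x, F1 t x * Mw x ∂μ) :=
                mul_le_mul_right (hmeas_bound t (mem_Ioi.mp ht)) _
            _ = ∫⁻ x, (ENNReal.ofReal (q * t^(q-1)) * (ENNReal.ofReal (t/2))⁻¹)
                  * (F1 t x * Mw x) ∂μ := by
                rw [← mul_assoc, lintegral_const_mul' _ _
                  (ENNReal.mul_ne_top ENNReal.ofReal_ne_top (ENNReal.inv_ne_top.mpr ht'))]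
      _ = ∫⁻ x, ∫⁻ t in Ioi (0:ℝ),
            (ENNReal.ofReal (q * t^(q-1)) * (ENNReal.ofReal (t/2))⁻¹)
              * (F1 t x * Mw x) ∂volume ∂μ :=
          lintegral_lintegral_swap (μ := volume.restrict (Ioi (0:ℝ))) (ν := μ)
            hΨm.aemeasurable
      _ = ∫⁻ x, C * (F x ^ q * Mw x) ∂μ := by
          congr 1
          funext x
          have hptwise : ∀ t : ℝ,
              (ENNReal.ofReal (q * t^(q-1)) * (ENNReal.ofReal (t/2))⁻¹)
                * (F1 t x * Mw x)
              = (if ENNReal.ofReal (t/2) < F x then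
                  ENNReal.ofReal (q * t^(q-1)) * (ENNReal.ofReal (t/2))⁻¹ else 0)
                  * (F x * Mw x) := by
            intro t
            by_cases h : ENNReal.ofReal (t/2) < F x
            · simp only [hF1def, if_pos h]
            · simp [hF1def, if_neg h]
          simp_rw [hptwise]
          have ham : AEMeasurable (fun t : ℝ => if ENNReal.ofReal (t/2) < F x then
              ENNReal.ofReal (q * t^(q-1)) * (ENNReal.ofReal (t/2))⁻¹ else 0)
              (volume.restrict (Ioi (0:ℝ))) :=
            (Measurable.ite (measurableSet_lt
              ((measurable_id.div_const 2).ennreal_ofReal) measurable_const)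
              (hrm.mul ((measurable_id.div_const 2).ennreal_ofReal.inv))
              measurable_const).aemeasurable
          rw [lintegral_mul_const'' (F x * Mw x) ham]
          rw [inner_integral hq (hFne x)]
          rcases eq_or_ne (F x) 0 with h0 | h0
          · rw [h0]
            simp [ENNReal.zero_rpow_of_pos hq0,
              ENNReal.zero_rpow_of_pos (by linarith : (0:ℝ) < q - 1)]
          · calc (C * F x ^ (q-1)) * (F x * Mw x)
                = C * ((F x ^ (q-1) * F x ^ (1:ℝ)) * Mw x) := by
                  rw [ENNReal.rpow_one]; ring
              _ = C * (F x ^ q * Mw x) := by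
                  rw [← ENNReal.rpow_add _ _ h0 (hFne x),
                    show q - 1 + 1 = q by ring]
      _ = C * ∫⁻ x, F x ^ q * Mw x ∂μ :=
          lintegral_const_mul' _ _ ENNReal.ofReal_ne_top
  exact main
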